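/- Let s be a unimodular function on 𝕋 (|s| = 1 a.e.) such that the equation conj(s)·h_+ = h_- with h_+ ∈ H², h_- ∈ H²_- has only the trivial solution h_+ = h_- = 0. Let N be a nonzero integer. Then s·t^N does not simultaneously satisfy both: (i) conj(s t^N)·h_+ = h_- has only the trivial solution, and (ii) conj(s t^N)·h_+ = t·h_- has a nontrivial solution. Concretely: if s additionally satisfies that conj(s)·h_+ = t·h_- has a nontrivial solution (i.e., s is canonical), then for N > 0, the equation conj(s t^N) h_+ = h_- has a nontrivial solution (h_+, h_-) ∈ H² × H²_-. -/

import Mathlib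

open MeasureTheory AddCircle Complex ComplexConjugate

instance : Fact (0 < 2 * Real.pi) := ⟨by positivity⟩

/-- The Hardy space condition: `f ∈ L²(𝕋)` with vanishing negative Fourier coefficients. -/
def MemHplus (f : AddCircle (2 * Real.pi) → ℂ) : Prop :=
  MemLp f 2 haarAddCircle ∧ ∀ n : ℤ, n < 0 → fourierCoeff f n = 0

/-- `f ∈ H²_- = L²(𝕋) ⊖ H²`: vanishing nonnegative Fourier coefficients. -/
def MemHminus (f : AddCircle (2 * Real.pi) → ℂ) : Prop :=
  MemLp f 2 haarAddCircle ∧ ∀ n : ℤ, 0 ≤ n → fourierCoeff f n = 0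

/-- A unimodular `s` is canonical if `conj s · h₊ = h₋` has only the trivial solution while
`conj s · h₊ = t · h₋` has a nontrivial solution, `h± ∈ H²_±`. -/
def IsCanonical (s : AddCircle (2 * Real.pi) → ℂ) : Prop :=
  (∀ hp hm : AddCircle (2 * Real.pi) → ℂ, MemHplus hp → MemHminus hm →
      (∀ᵐ x ∂haarAddCircle, conj (s x) * hp x = hm x) →
      hp =ᵐ[haarAddCircle] 0) ∧
  (∃ hp hm : AddCircle (2 * Real.pi) → ℂ, MemHplus hp ∧ MemHminus hm ∧
      (∀ᵐ x ∂haarAddCircle, conj (s x) * hp x = fourier 1 x * hm x) ∧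
      ¬ hp =ᵐ[haarAddCircle] 0)

lemma memLp_fourier_mul (k : ℤ) {f : AddCircle (2 * Real.pi) → ℂ}
    (hf : MemLp f 2 haarAddCircle) :
    MemLp (fun x => fourier k x * f x) 2 haarAddCircle := by
  have hmeas : AEStronglyMeasurable (fun x => fourier k x * f x) haarAddCircle :=
    ((fourier k).continuous.aestronglyMeasurable).mul hf.aestronglyMeasurable
  refine MemLp.of_le hf hmeas ?_
  filter_upwards with x
  rw [norm_mul]
  simp [Circle.norm_coe]

lemma fourierCoeff_fourier_mul (k : ℤ) (f : AddCircle (2 * Real.pi) → ℂ) (n : ℤ) :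
    fourierCoeff (fun x => fourier k x * f x) n = fourierCoeff f (n - k) := by
  simp only [fourierCoeff, smul_eq_mul]
  congr 1
  ext x
  rw [← mul_assoc, ← fourier_add]
  congr 2
  ring

theorem stmt4 (s : AddCircle (2 * Real.pi) → ℂ)
    (hs : ∀ᵐ x ∂haarAddCircle, ‖s x‖ = 1)
    (hcan : IsCanonical s) :
    (∀ N : ℤ, N ≠ 0 → ¬ IsCanonical (fun x => s x * fourier N x)) ∧
    (∀ N : ℤ, 0 < N → ∃ hp hm : AddCircle (2 * Real.pi) → ℂ,
      MemHplus hp ∧ MemHminus hm ∧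
      (∀ᵐ x ∂haarAddCircle, conj (s x * fourier N x) * hp x = hm x) ∧
      ¬ hp =ᵐ[haarAddCircle] 0) := by
  obtain ⟨hp, hm, hhp, hhm, heq, hnt⟩ := hcan.2
  have part2 : ∀ N : ℤ, 0 < N → ∃ hp hm : AddCircle (2 * Real.pi) → ℂ,
      MemHplus hp ∧ MemHminus hm ∧
      (∀ᵐ x ∂haarAddCircle, conj (s x * fourier N x) * hp x = hm x) ∧
      ¬ hp =ᵐ[haarAddCircle] 0 := by
    intro N hN
    refine ⟨hp, fun x => fourier (1 - N) x * hm x, hhp,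
      ⟨memLp_fourier_mul _ hhm.1, fun n hn => ?_⟩, ?_, hnt⟩
    · rw [fourierCoeff_fourier_mul]
      exact hhm.2 _ (by omega)
    · filter_upwards [heq] with x hx
      have h1 : conj (s x * fourier N x) * hp x = fourier (-N) x * (conj (s x) * hp x) := by
        rw [map_mul, ← fourier_neg]; ring
      rw [h1, hx, ← mul_assoc, ← fourier_add]
      congr 2
      ring
  refine ⟨?_, part2⟩
  intro N hN hcanN
  rcases lt_or_gt_of_ne hN with hneg | hpos
  · obtain ⟨p, m, hpP, hmM, heq2, hnt2⟩ := hcanN.2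
    apply hnt2
    refine hcan.1 p (fun x => fourier (1 + N) x * m x) hpP
      ⟨memLp_fourier_mul _ hmM.1, fun n hn => ?_⟩ ?_
    · rw [fourierCoeff_fourier_mul]
      exact hmM.2 _ (by omega)
    · filter_upwards [heq2] with x hx
      have h1 : conj (s x) * p x = fourier N x * (conj (s x * fourier N x) * p x) := by
        rw [map_mul, ← fourier_neg]
        have h2 : fourier N x * fourier (-N) x = 1 := by
          rw [← fourier_add]; simp
        calc conj (s x) * p x = conj (s x) * p x * (fourier N x * fourier (-N) x) := by
              rw [h2, mul_one]
          _ = fourier N x * (conj (s x) * fourier (-N) x * p x) := by ring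
      rw [h1, hx, ← mul_assoc, ← fourier_add, add_comm N 1]
  · obtain ⟨p2, m2, hP, hM, he, hn⟩ := part2 N hpos
    exact hn (hcanN.1 p2 m2 hP hM he)
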